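/- For any request sets R_1,...,R_n ⊆ {1,...,T} and R'_1,...,R'_n ⊆ {1,...,T} and any agent i ∈ {1,...,n}, the deterministic DMMF allocation satisfies |W_i(R_1,...,R_n) − W_i(R'_1,...,R'_n)| ≤ Σ_{j=1}^n |R_j △ R'_j|, where △ denotes symmetric difference of sets. -/

import Mathlib

open scoped symmDiff

/-- Winner predicate: given fair shares `α`, previous win counts `Wprev`, and the requests `r`
in the current round, agent `i` wins iff it requests and beats (in normalized win count,
ties broken by smallest index) every other requesting agent. -/
def winsAt {n : ℕ} (α : Fin n → ℝ) (Wprev : Fin n → ℕ) (r : Fin n → Bool) (i : Fin n) : Prop :=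
  r i = true ∧ ∀ j : Fin n, r j = true →
    ((Wprev i : ℝ) / α i < (Wprev j : ℝ) / α j ∨
      ((Wprev i : ℝ) / α i = (Wprev j : ℝ) / α j ∧ i ≤ j))

open Classical in
/-- `W α r t i` : number of rounds, among the first `t` rounds, won by agent `i` under the
DMMF allocation rule, when the (sample-path) requests are given by `r` (`r t i = true` means
agent `i` requests in round `t+1`). -/
noncomputable def W {n : ℕ} (α : Fin n → ℝ) (r : ℕ → Fin n → Bool) : ℕ → Fin n → ℕ
  | 0, _ => 0
  | t + 1, i => W α r t i + (if winsAt α (W α r t) (r t) i then 1 else 0)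

section Aux

variable {n : ℕ} (α : Fin n → ℝ)

lemma winsAt_unique {Wp : Fin n → ℕ} {rr : Fin n → Bool} {i j : Fin n}
    (hi : winsAt α Wp rr i) (hj : winsAt α Wp rr j) : i = j := by
  obtain ⟨hri, hic⟩ := hi
  obtain ⟨hrj, hjc⟩ := hj
  rcases hic j hrj with h1 | ⟨h1, h1'⟩
  · rcases hjc i hri with h2 | ⟨h2, _⟩ <;> linarith
  · rcases hjc i hri with h2 | ⟨h2, h2'⟩
    · linarith
    · exact le_antisymm h1' h2'

lemma winsAt_exists {Wp : Fin n → ℕ} {rr : Fin n → Bool} (h : ∃ j, rr j = true) :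
    ∃ i, winsAt α Wp rr i := by
  classical
  set S : Finset (Fin n) := Finset.univ.filter (fun j => rr j = true) with hS
  have hSne : S.Nonempty := by
    obtain ⟨j, hj⟩ := h
    exact ⟨j, by simp [hS, hj]⟩
  set f : Fin n → ℝ := fun j => (Wp j : ℝ) / α j with hf
  set m := S.inf' hSne f with hm
  set S' : Finset (Fin n) := S.filter (fun j => f j = m) with hS'
  have hS'ne : S'.Nonempty := by
    obtain ⟨j, hjS, hjm⟩ := Finset.exists_mem_eq_inf' hSne f
    exact ⟨j, by simp [hS', hjS, hjm.symm, hm]⟩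
  set i := S'.min' hS'ne with hi
  have hiS' : i ∈ S' := Finset.min'_mem _ _
  have hiS : i ∈ S := (Finset.mem_filter.1 hiS').1
  have hifm : f i = m := (Finset.mem_filter.1 hiS').2
  refine ⟨i, (Finset.mem_filter.1 hiS).2, ?_⟩
  intro j hj
  have hjS : j ∈ S := Finset.mem_filter.2 ⟨Finset.mem_univ _, hj⟩
  have hmle : m ≤ f j := Finset.inf'_le f hjS
  rcases eq_or_lt_of_le hmle with heq | hlt
  · right
    refine ⟨show f i = f j from hifm.trans heq, ?_⟩
    exact Finset.min'_le _ _ (Finset.mem_filter.2 ⟨hjS, heq.symm⟩)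
  · left
    show f i < f j
    rw [hifm]; exact hlt

lemma key_dichotomy (hα : ∀ i, 0 < α i) {Wa Wb : Fin n → ℕ} {rr : Fin n → Bool} {w w' : Fin n}
    (hne : w ≠ w') (hw : winsAt α Wa rr w) (hw' : winsAt α Wb rr w') :
    1 ≤ (Wb w : ℤ) - (Wa w : ℤ) ∨ (Wb w' : ℤ) - (Wa w' : ℤ) ≤ -1 := by
  have h1 := hw.2 w' hw'.1
  have h2 := hw'.2 w hw.1
  have hstrict : (Wa w : ℝ) / α w + (Wb w' : ℝ) / α w' <
      (Wa w' : ℝ) / α w' + (Wb w : ℝ) / α w := by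
    rcases h1 with h1 | ⟨h1, h1'⟩
    · rcases h2 with h2 | ⟨h2, _⟩ <;> linarith
    · rcases h2 with h2 | ⟨h2, h2'⟩
      · linarith
      · exact absurd (le_antisymm h1' h2') hne
  by_contra hcon
  push_neg at hcon
  obtain ⟨hc1, hc2⟩ := hcon
  have hbw : Wb w ≤ Wa w := by omega
  have hbw' : Wa w' ≤ Wb w' := by omega
  have e1 : (Wb w : ℝ) / α w ≤ (Wa w : ℝ) / α w := by
    exact (div_le_div_iff_of_pos_right (hα w)).2 (by exact_mod_cast hbw)
  have e2 : (Wa w' : ℝ) / α w' ≤ (Wb w' : ℝ) / α w' := by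
    exact (div_le_div_iff_of_pos_right (hα w')).2 (by exact_mod_cast hbw')
  linarith

open Classical in
lemma W_sub_succ (r r' : ℕ → Fin n → Bool) (t : ℕ) (i : Fin n) :
    (W α r' (t + 1) i : ℤ) - (W α r (t + 1) i : ℤ)
      = ((W α r' t i : ℤ) - (W α r t i : ℤ))
        + (if winsAt α (W α r' t) (r' t) i then 1 else 0)
        - (if winsAt α (W α r t) (r t) i then 1 else 0) := by
  simp only [W]
  split_ifs <;> push_cast <;> ring

lemma max_aux1 (a x y : ℤ) (hx : 0 ≤ x) (hy : 0 ≤ y) :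
    max (a + x - y) 0 ≤ max a 0 + x := by
  apply max_le
  · have := le_max_left a 0; linarith
  · have := le_max_right a 0; linarith

lemma max_aux2 (a b : ℤ) (h : 1 ≤ a ∨ b ≤ -1) :
    max (a - 1) 0 + max (b + 1) 0 ≤ max a 0 + max b 0 := by
  rcases h with h | h
  · rw [max_eq_left (by omega : (0:ℤ) ≤ a - 1), max_eq_left (by omega : (0:ℤ) ≤ a)]
    have : max (b + 1) 0 ≤ max b 0 + 1 := by
      apply max_le
      · have := le_max_left b 0; linarith
      · have := le_max_right b 0; linarith
    linarith
  · rw [max_eq_right (by omega : b + 1 ≤ (0:ℤ)), max_eq_right (by omega : b ≤ (0:ℤ))]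
    have : max (a - 1) 0 ≤ max a 0 := by
      apply max_le
      · have := le_max_left a 0; linarith
      · exact le_max_right a 0
    linarith

open Classical in
lemma sum_ind_le_one (Q : Fin n → Prop) (hQ : ∀ i j, Q i → Q j → i = j) :
    (∑ i : Fin n, if Q i then (1 : ℤ) else 0) ≤ 1 := by
  by_cases h : ∃ i, Q i
  · obtain ⟨i0, hi0⟩ := h
    have hiff : ∀ j, Q j ↔ j = i0 := fun j => ⟨fun hj => hQ j i0 hj hi0, fun e => e ▸ hi0⟩
    simp [hiff]
  · push_neg at h
    simp [h]

lemma sum_pair_le {g g' : Fin n → ℤ} {w w' : Fin n} (hne : w ≠ w')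
    (hother : ∀ i, i ≠ w → i ≠ w' → g' i = g i)
    (hpair : g' w + g' w' ≤ g w + g w') :
    ∑ i, g' i ≤ ∑ i, g i := by
  classical
  have key : ∀ h : Fin n → ℤ,
      ∑ i, h i = (∑ i ∈ (Finset.univ.erase w).erase w', h i) + h w' + h w := by
    intro h
    rw [Finset.sum_erase_add _ _ (Finset.mem_erase.2 ⟨hne.symm, Finset.mem_univ _⟩),
      Finset.sum_erase_add _ _ (Finset.mem_univ w)]
  rw [key g', key g]
  have heq : ∑ i ∈ (Finset.univ.erase w).erase w', g' i
      = ∑ i ∈ (Finset.univ.erase w).erase w', g i := by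
    apply Finset.sum_congr rfl
    intro x hx
    have h1 := Finset.mem_erase.1 hx
    have h2 := Finset.mem_erase.1 h1.2
    exact hother x h2.1 h1.1
  linarith

open Classical in
/-- One step of the coupled evolution: the positive-part potential increases by at most 1. -/
lemma P_step (r r' : ℕ → Fin n → Bool) (t : ℕ) :
    (∑ i, max ((W α r' (t + 1) i : ℤ) - (W α r (t + 1) i : ℤ)) 0)
      ≤ (∑ i, max ((W α r' t i : ℤ) - (W α r t i : ℤ)) 0) + 1 := by
  calc (∑ i, max ((W α r' (t + 1) i : ℤ) - (W α r (t + 1) i : ℤ)) 0)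
      ≤ ∑ i, (max ((W α r' t i : ℤ) - (W α r t i : ℤ)) 0
          + if winsAt α (W α r' t) (r' t) i then 1 else 0) := by
        apply Finset.sum_le_sum
        intro i _
        rw [W_sub_succ α r r' t i]
        apply max_aux1
        · split_ifs <;> norm_num
        · split_ifs <;> norm_num
    _ = (∑ i, max ((W α r' t i : ℤ) - (W α r t i : ℤ)) 0)
          + ∑ i, if winsAt α (W α r' t) (r' t) i then (1:ℤ) else 0 :=
        Finset.sum_add_distrib
    _ ≤ _ := by
        have := sum_ind_le_one (fun i => winsAt α (W α r' t) (r' t) i)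
          (fun i j hi hj => winsAt_unique α hi hj)
        linarith

open Classical in
/-- One step with identical requests: the positive-part potential does not increase. -/
lemma P_step_eq (hα : ∀ i, 0 < α i) (r r' : ℕ → Fin n → Bool) (t : ℕ)
    (heq : r t = r' t) :
    (∑ i, max ((W α r' (t + 1) i : ℤ) - (W α r (t + 1) i : ℤ)) 0)
      ≤ ∑ i, max ((W α r' t i : ℤ) - (W α r t i : ℤ)) 0 := by
  by_cases hreq : ∃ j, r t j = true
  · obtain ⟨w, hw⟩ := winsAt_exists α (Wp := W α r t) hreq
    have hreq' : ∃ j, r' t j = true := heq ▸ hreq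
    obtain ⟨w', hw'⟩ := winsAt_exists α (Wp := W α r' t) hreq'
    have hiff1 : ∀ i, winsAt α (W α r t) (r t) i ↔ i = w :=
      fun i => ⟨fun h => winsAt_unique α h hw, fun e => e ▸ hw⟩
    have hiff2 : ∀ i, winsAt α (W α r' t) (r' t) i ↔ i = w' :=
      fun i => ⟨fun h => winsAt_unique α h hw', fun e => e ▸ hw'⟩
    have hsum : (∑ i, max ((W α r' (t + 1) i : ℤ) - (W α r (t + 1) i : ℤ)) 0)
        = ∑ i, max (((W α r' t i : ℤ) - (W α r t i : ℤ))
            + (if i = w' then 1 else 0) - (if i = w then 1 else 0)) 0 := by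
      apply Finset.sum_congr rfl
      intro i _
      rw [W_sub_succ α r r' t i]
      simp only [hiff1, hiff2]
    rw [hsum]
    by_cases hww : w = w'
    · subst hww
      apply le_of_eq
      apply Finset.sum_congr rfl
      intro i _
      by_cases hi : i = w <;> simp [hi]
    · have hw'' : winsAt α (W α r' t) (r t) w' := by rw [heq]; exact hw'
      have hkey := key_dichotomy α hα hww hw hw''
      apply sum_pair_le (w := w) (w' := w') hww
      · intro i hiw hiw'
        simp [hiw, hiw']
      · simp only [if_neg hww, if_neg (Ne.symm hww), eq_self_iff_true, if_true]
        have h2 := max_aux2 ((W α r' t w : ℤ) - (W α r t w : ℤ))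
          ((W α r' t w' : ℤ) - (W α r t w' : ℤ)) hkey
        have e1 : (W α r' t w : ℤ) - (W α r t w : ℤ) + 0 - 1
            = (W α r' t w : ℤ) - (W α r t w : ℤ) - 1 := by ring
        have e2 : (W α r' t w' : ℤ) - (W α r t w' : ℤ) + 1 - 0
            = (W α r' t w' : ℤ) - (W α r t w' : ℤ) + 1 := by ring
        rw [e1, e2]
        linarith
  · have h1 : ∀ i, ¬ winsAt α (W α r t) (r t) i := fun i hi => hreq ⟨i, hi.1⟩
    have h2 : ∀ i, ¬ winsAt α (W α r' t) (r' t) i := fun i hi => hreq ⟨i, heq ▸ hi.1⟩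
    apply le_of_eq
    apply Finset.sum_congr rfl
    intro i _
    rw [W_sub_succ α r r' t i, if_neg (h1 i), if_neg (h2 i)]
    ring_nf

end Aux

/-- Bounded difference of the deterministic DMMF allocation: changing the
request sets `R₁, …, Rₙ ⊆ {1, …, T}` to `R'₁, …, R'ₙ ⊆ {1, …, T}` changes the total number
of rounds won by any agent `i` by at most `Σⱼ |Rⱼ △ R'ⱼ|`. -/
theorem detDMMF_bounded_difference {n T : ℕ} (α : Fin n → ℝ) (hα : ∀ i, 0 < α i)
    (R R' : Fin n → Finset ℕ)
    (hR : ∀ j, R j ⊆ Finset.Icc 1 T) (hR' : ∀ j, R' j ⊆ Finset.Icc 1 T) (i : Fin n) :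
    |(W α (fun s k => decide ((s + 1) ∈ R k)) T i : ℤ)
        - (W α (fun s k => decide ((s + 1) ∈ R' k)) T i : ℤ)|
      ≤ ∑ j : Fin n, ((R j ∆ R' j).card : ℤ) := by
  classical
  set r : ℕ → Fin n → Bool := fun s k => decide ((s + 1) ∈ R k) with hr
  set r' : ℕ → Fin n → Bool := fun s k => decide ((s + 1) ∈ R' k) with hr'
  set Dc : ℕ → ℕ := fun t => ((Finset.range t).filter (fun s => r s ≠ r' s)).card with hDc
  have main : ∀ t : ℕ,
      (∑ j, max ((W α r' t j : ℤ) - (W α r t j : ℤ)) 0 ≤ (Dc t : ℤ))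
        ∧ (∑ j, max ((W α r t j : ℤ) - (W α r' t j : ℤ)) 0 ≤ (Dc t : ℤ)) := by
    intro t
    induction t with
    | zero => simp [W, Dc]
    | succ t ih =>
      by_cases hc : r t = r' t
      · have hD : Dc (t + 1) = Dc t := by
          simp [Dc, Finset.range_add_one, Finset.filter_insert, hc]
        rw [hD]
        exact ⟨le_trans (P_step_eq α hα r r' t hc) ih.1,
          le_trans (P_step_eq α hα r' r t hc.symm) ih.2⟩
      · have hD : Dc (t + 1) = Dc t + 1 := by
          simp only [Dc, Finset.range_add_one, Finset.filter_insert, if_pos hc]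
          rw [Finset.card_insert_of_notMem (by simp)]
        rw [hD]
        push_cast
        exact ⟨le_trans (P_step α r r' t) (by linarith [ih.1]),
          le_trans (P_step α r' r t) (by linarith [ih.2])⟩
  have hDle : (Dc T : ℤ) ≤ ∑ j : Fin n, ((R j ∆ R' j).card : ℤ) := by
    have hnat : Dc T ≤ ∑ j : Fin n, (R j ∆ R' j).card := by
      have hsub : (Finset.range T).filter (fun s => r s ≠ r' s)
          ⊆ Finset.univ.biUnion (fun j => (R j ∆ R' j).image (fun x => x - 1)) := by
        intro s hs
        have hne := (Finset.mem_filter.1 hs).2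
        obtain ⟨k, hk⟩ := Function.ne_iff.1 hne
        have hkk : ¬ ((s + 1 ∈ R k) ↔ (s + 1 ∈ R' k)) := by
          intro hiff
          exact hk (by simp [hr, hr', decide_eq_decide.2 hiff])
        have hmem : s + 1 ∈ R k ∆ R' k := by
          rw [Finset.mem_symmDiff]
          tauto
        exact Finset.mem_biUnion.2 ⟨k, Finset.mem_univ _,
          Finset.mem_image.2 ⟨s + 1, hmem, by omega⟩⟩
      calc Dc T ≤ (Finset.univ.biUnion
            (fun j => (R j ∆ R' j).image (fun x => x - 1))).card :=
          Finset.card_le_card hsub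
        _ ≤ ∑ j : Fin n, ((R j ∆ R' j).image (fun x => x - 1)).card :=
          Finset.card_biUnion_le
        _ ≤ ∑ j : Fin n, (R j ∆ R' j).card :=
          Finset.sum_le_sum (fun j _ => Finset.card_image_le)
    exact_mod_cast hnat
  have h1 := (main T).1
  have h2 := (main T).2
  have hb1 : (W α r T i : ℤ) - (W α r' T i : ℤ) ≤ (Dc T : ℤ) := by
    calc (W α r T i : ℤ) - (W α r' T i : ℤ)
        ≤ max ((W α r T i : ℤ) - (W α r' T i : ℤ)) 0 := le_max_left _ _
      _ ≤ ∑ j, max ((W α r T j : ℤ) - (W α r' T j : ℤ)) 0 :=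
          Finset.single_le_sum (f := fun j => max ((W α r T j : ℤ) - (W α r' T j : ℤ)) 0)
            (fun j _ => le_max_right _ 0) (Finset.mem_univ i)
      _ ≤ (Dc T : ℤ) := h2
  have hb2 : (W α r' T i : ℤ) - (W α r T i : ℤ) ≤ (Dc T : ℤ) := by
    calc (W α r' T i : ℤ) - (W α r T i : ℤ)
        ≤ max ((W α r' T i : ℤ) - (W α r T i : ℤ)) 0 := le_max_left _ _
      _ ≤ ∑ j, max ((W α r' T j : ℤ) - (W α r T j : ℤ)) 0 :=
          Finset.single_le_sum (f := fun j => max ((W α r' T j : ℤ) - (W α r T j : ℤ)) 0)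
            (fun j _ => le_max_right _ 0) (Finset.mem_univ i)
      _ ≤ (Dc T : ℤ) := h1
  rw [abs_le]
  constructor <;> linarith
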